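/- The asymptotic integrated mean squared error is a function of the product λρ only: if λ₁, λ₂ > 0 and ρ₁, ρ₂:[0,1]→(0,∞) are m-times continuously differentiable with λ₁ ρ₁(t) = λ₂ ρ₂(t) for all t ∈ [0,1], then ∫₀¹ { λ₁² r(t)² [((ρ₁ f₀^{(m)})^{(m)})(t)]² + (L₀ / (n λ₁^{1/(2m)})) r(t)^{1−1/(2m)} ρ₁(t)^{-1/(2m)} } dt = ∫₀¹ { λ₂² r(t)² [((ρ₂ f₀^{(m)})^{(m)})(t)]² + (L₀ / (n λ₂^{1/(2m)})) r(t)^{1−1/(2m)} ρ₂(t)^{-1/(2m)} } dt. -/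

import Mathlib

open MeasureTheory Set

noncomputable section

/-- The asymptotic integrated mean squared error for smoothing parameter `λ` and
penalty function `ρ`:
`∫₀¹ { λ² r² [((ρ f₀^{(m)})^{(m)})]² + (L₀/(n λ^{1/(2m)})) r^{1-1/(2m)} ρ^{-1/(2m)} }`. -/
def IMSE (m n : ℕ) (r f0 : ℝ → ℝ) (L0 lam : ℝ) (ρ : ℝ → ℝ) : ℝ :=
  ∫ t in (0 : ℝ)..1,
    (lam ^ 2 * r t ^ 2 *
        (iteratedDeriv m (fun s => ρ s * iteratedDeriv m f0 s) t) ^ 2 +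
      (L0 / (n * lam ^ ((1 : ℝ) / (2 * m)))) *
        r t ^ ((1 : ℝ) - 1 / (2 * m)) * ρ t ^ (-(1 : ℝ) / (2 * m)))

lemma iteratedDeriv_cmul (n : ℕ) (c : ℝ) (g : ℝ → ℝ) :
    iteratedDeriv n (fun s => c * g s) = fun x => c * iteratedDeriv n g x := by
  induction n with
  | zero => simp [iteratedDeriv_zero]
  | succ k ih =>
    funext x
    rw [iteratedDeriv_succ, iteratedDeriv_succ, ih]
    exact deriv_const_mul_field c

/-- the asymptotic integrated mean squared error depends only on the
product `λ ρ`: if `λ₁ ρ₁ = λ₂ ρ₂` on `[0,1]`, the two integrated mean squared errors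
coincide. -/
theorem IMSE_depends_only_on_lambda_rho
    (m n : ℕ) (hm : 1 ≤ m) (hn : 1 ≤ n)
    (r : ℝ → ℝ) (hrc : ContinuousOn r (Icc 0 1))
    (hrpos : ∀ t ∈ Icc (0 : ℝ) 1, 0 < r t)
    (L0 : ℝ) (hL0 : 0 < L0)
    (f0 : ℝ → ℝ) (hf0 : ContDiff ℝ (2 * m) f0)
    (lam1 lam2 : ℝ) (hlam1 : 0 < lam1) (hlam2 : 0 < lam2)
    (ρ1 ρ2 : ℝ → ℝ) (hρ1 : ContDiff ℝ m ρ1) (hρ2 : ContDiff ℝ m ρ2)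
    (hρ1pos : ∀ t ∈ Icc (0 : ℝ) 1, 0 < ρ1 t) (hρ2pos : ∀ t ∈ Icc (0 : ℝ) 1, 0 < ρ2 t)
    (heq : ∀ t ∈ Icc (0 : ℝ) 1, lam1 * ρ1 t = lam2 * ρ2 t) :
    IMSE m n r f0 L0 lam1 ρ1 = IMSE m n r f0 L0 lam2 ρ2 := by
  unfold IMSE
  apply intervalIntegral.integral_congr_ae
  have h1 : ({(1:ℝ)}ᶜ : Set ℝ) ∈ ae (volume : Measure ℝ) :=
    compl_mem_ae_iff.mpr Real.volume_singleton
  filter_upwards [h1] with x hx1 hx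
  rw [Set.uIoc_of_le (by norm_num : (0:ℝ) ≤ 1)] at hx
  have hxo : x ∈ Ioo (0:ℝ) 1 := ⟨hx.1, lt_of_le_of_ne hx.2 hx1⟩
  have hxIcc : x ∈ Icc (0:ℝ) 1 := ⟨hxo.1.le, hxo.2.le⟩
  set c : ℝ := lam2 / lam1 with hc
  -- neighborhood equality
  have hnbd : Icc (0:ℝ) 1 ∈ nhds x := mem_nhds_iff.mpr ⟨Ioo 0 1, Ioo_subset_Icc_self, isOpen_Ioo, hxo⟩
  have hev : (fun s => ρ1 s * iteratedDeriv m f0 s)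
      =ᶠ[nhds x] (fun s => c * (ρ2 s * iteratedDeriv m f0 s)) := by
    filter_upwards [hnbd] with s hs
    have h := heq s hs
    have : ρ1 s = c * ρ2 s := by
      field_simp [hc]
      rw [hc, div_mul_eq_mul_div, eq_div_iff hlam1.ne']; linarith [h]
    rw [this]; ring
  have hkey : iteratedDeriv m (fun s => ρ1 s * iteratedDeriv m f0 s) x
      = c * iteratedDeriv m (fun s => ρ2 s * iteratedDeriv m f0 s) x := by
    rw [hev.iteratedDeriv_eq m, iteratedDeriv_cmul]
  have hterm1 : lam1 ^ 2 * r x ^ 2 *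
        (iteratedDeriv m (fun s => ρ1 s * iteratedDeriv m f0 s) x) ^ 2
      = lam2 ^ 2 * r x ^ 2 *
        (iteratedDeriv m (fun s => ρ2 s * iteratedDeriv m f0 s) x) ^ 2 := by
    rw [hkey, hc]
    field_simp
  -- second term
  set e : ℝ := (1 : ℝ) / (2 * m) with he
  have hρ1x := hρ1pos x hxIcc
  have hρ2x := hρ2pos x hxIcc
  have hpow : lam1 ^ e * ρ1 x ^ e = lam2 ^ e * ρ2 x ^ e := by
    rw [← Real.mul_rpow hlam1.le hρ1x.le, ← Real.mul_rpow hlam2.le hρ2x.le, heq x hxIcc]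
  have hterm2 : (L0 / (n * lam1 ^ e)) * r x ^ ((1 : ℝ) - 1 / (2 * m)) * ρ1 x ^ (-(1 : ℝ) / (2 * m))
      = (L0 / (n * lam2 ^ e)) * r x ^ ((1 : ℝ) - 1 / (2 * m)) * ρ2 x ^ (-(1 : ℝ) / (2 * m)) := by
    have hne : -(1:ℝ) / (2 * m) = -e := by rw [he]; ring
    rw [hne, Real.rpow_neg hρ1x.le, Real.rpow_neg hρ2x.le]
    have hl1 : (0:ℝ) < lam1 ^ e := Real.rpow_pos_of_pos hlam1 e
    have hl2 : (0:ℝ) < lam2 ^ e := Real.rpow_pos_of_pos hlam2 e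
    have hr1 : (0:ℝ) < ρ1 x ^ e := Real.rpow_pos_of_pos hρ1x e
    have hr2 : (0:ℝ) < ρ2 x ^ e := Real.rpow_pos_of_pos hρ2x e
    rcases Nat.eq_zero_or_pos n with rfl | hnpos
    · simp
    have hn0 : (n:ℝ) ≠ 0 := Nat.cast_ne_zero.mpr hnpos.ne'
    have gen : ∀ A B C D : ℝ, A / B * C * D⁻¹ = A * C / (B * D) := by
      intro A B C D
      rw [div_eq_mul_inv, div_eq_mul_inv, mul_inv]; ring
    rw [gen, gen, mul_assoc (↑n : ℝ), mul_assoc (↑n : ℝ), hpow]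
  rw [hterm1, hterm2]


end
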